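/- Let (G_1, r_1) be a rooted graph and let (T, r_2) be a rooted tree whose root has k children, each the root of a copy of the same rooted tree (T', u'). Let G = G_1 · T be the coalescence identifying r_1 with r_2. Then π(G, x) = π(T', x)^{k−1} · ( π(G_1, x)·π(T', x) + k·π(G_1 − r_1, x)·π(T' − u', x) ). In particular, G has purely imaginary per-spectrum if and only if the polynomial H(x) = π(G_1,x)·π(T',x) + k·π(G_1−r_1,x)·π(T'−u',x) has all roots purely imaginary. -/

import Mathlib

open Polynomial

/-- The permanental polynomial of a simple graph `G`:
`π(G, x) = per(x I − A(G))`, computed over `ℂ[X]`. -/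
noncomputable def permPoly {V : Type*} [Fintype V] [DecidableEq V]
    (G : SimpleGraph V) : Polynomial ℂ :=
  letI := Classical.decRel G.Adj
  Matrix.permanent ((X : Polynomial ℂ) • (1 : Matrix V V (Polynomial ℂ))
      - (SimpleGraph.adjMatrix (Polynomial ℂ) G))

/-- The coalescence `G₁ · G₂` of rooted graphs `(G₁, r₁)` and `(G₂, r₂)`,
obtained by identifying `r₁` with `r₂`. -/
def coalesce {V₁ V₂ : Type*} (G₁ : SimpleGraph V₁) (r₁ : V₁)
    (G₂ : SimpleGraph V₂) (r₂ : V₂) :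
    SimpleGraph (V₁ ⊕ {v : V₂ // v ≠ r₂}) :=
  SimpleGraph.fromRel fun x y =>
    match x, y with
    | .inl a, .inl b => G₁.Adj a b
    | .inl a, .inr b => a = r₁ ∧ G₂.Adj r₂ b.1
    | .inr a, .inl b => b = r₁ ∧ G₂.Adj r₂ a.1
    | .inr a, .inr b => G₂.Adj a.1 b.1

/-- The rooted tree `R(T'^(k), r)` whose root (the vertex `Sum.inl ()`) has `k`
children, each of which is the root `u'` of a copy of the rooted tree
`(T', u')`. -/
def starTree {V' : Type*} (k : ℕ) (T' : SimpleGraph V') (u' : V') :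
    SimpleGraph (Unit ⊕ Fin k × V') :=
  SimpleGraph.fromRel fun x y =>
    match x, y with
    | .inl _, .inr (_, b) => b = u'
    | .inr (_, a), .inl _ => a = u'
    | .inr (i, a), .inr (j, b) => i = j ∧ T'.Adj a b
    | .inl _, .inl _ => False

section AuxPerm

open Polynomial Equiv Finset Matrix

variable {R : Type*} {α β : Type*} [DecidableEq α] [Fintype α] [DecidableEq β] [Fintype β]

theorem permanent_submatrix_equiv_self' {m n : Type*} [DecidableEq m] [Fintype m] [DecidableEq n]
    [Fintype n] [CommSemiring R] (e : n ≃ m) (A : Matrix m m R) :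
    (A.submatrix e e).permanent = A.permanent := by
  rw [Matrix.permanent, Matrix.permanent]
  apply Fintype.sum_equiv (Equiv.permCongr e)
  intro σ
  apply Fintype.prod_equiv e
  intro i
  rw [Equiv.permCongr_apply, Equiv.symm_apply_apply, Matrix.submatrix_apply]

theorem prod_updateRow [CommSemiring R] {n : Type*} [DecidableEq n] [Fintype n]
    (M : Matrix n n R) (j : n) (w : n → R) (σ : Equiv.Perm n) :
    ∏ i, (updateRow M j w) (σ i) i
      = w (σ.symm j) * ∏ i ∈ Finset.univ.erase (σ.symm j), M (σ i) i := by
  rw [← Finset.mul_prod_erase Finset.univ _ (Finset.mem_univ (σ.symm j))]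
  congr 1
  · rw [Equiv.apply_symm_apply, Matrix.updateRow_self]
  · refine Finset.prod_congr rfl fun i hi => ?_
    rw [Matrix.updateRow_ne]
    intro h
    exact (Finset.ne_of_mem_erase hi) (by rw [← h, Equiv.symm_apply_apply])

theorem permanent_updateRow_add' [CommSemiring R] {n : Type*} [DecidableEq n] [Fintype n]
    (M : Matrix n n R) (j : n) (u v : n → R) :
    (updateRow M j (u + v)).permanent
      = (updateRow M j u).permanent + (updateRow M j v).permanent := by
  simp only [Matrix.permanent, prod_updateRow, Pi.add_apply, add_mul, Finset.sum_add_distrib]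

theorem permanent_updateColumn_add' [CommSemiring R] {n : Type*} [DecidableEq n] [Fintype n]
    (M : Matrix n n R) (j : n) (u v : n → R) :
    (updateCol M j (u + v)).permanent
      = (updateCol M j u).permanent + (updateCol M j v).permanent := by
  rw [← Matrix.permanent_transpose, ← Matrix.updateRow_transpose, permanent_updateRow_add']
  simp [Matrix.updateRow_transpose, Matrix.permanent_transpose]

/-- Block-triangular permanents: if the upper-right block vanishes, the permanent factors. -/
theorem permanent_of_block_triangular [CommSemiring R] (M : Matrix (α ⊕ β) (α ⊕ β) R)
    (h : ∀ a b, M (Sum.inl a) (Sum.inr b) = 0) :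
    M.permanent = (M.submatrix Sum.inl Sum.inl).permanent * (M.submatrix Sum.inr Sum.inr).permanent := by
  classical
  have hinj := Equiv.Perm.sumCongrHom_injective (α := α) (β := β)
  rw [Matrix.permanent]
  rw [← Finset.sum_subset (Finset.subset_univ
      ((Finset.univ : Finset (Equiv.Perm α × Equiv.Perm β)).image (Equiv.Perm.sumCongrHom α β)))]
  · rw [Finset.sum_image (fun x _ y _ hxy => hinj hxy)]
    rw [Matrix.permanent, Matrix.permanent, Finset.sum_mul_sum]
    rw [← Finset.sum_product']
    refine Finset.sum_congr rfl fun p _ => ?_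
    rw [Fintype.prod_sum_type]
    simp [Equiv.Perm.sumCongrHom]
  · intro σ _ hσ
    -- σ is not block-preserving: some inr column goes to an inl row, giving a 0 factor
    by_cases hall : ∀ b : β, ∃ b' : β, σ (Sum.inr b) = Sum.inr b'
    · exfalso
      apply hσ
      choose g hg using hall
      have hginj : Function.Injective g := by
        intro b b' hbb'
        have : σ (Sum.inr b) = σ (Sum.inr b') := by rw [hg b, hg b', hbb']
        exact Sum.inr_injective (σ.injective this)
      have hgbij : Function.Bijective g := Finite.injective_iff_bijective.mp hginj
      have hall1 : ∀ a : α, ∃ a' : α, σ (Sum.inl a) = Sum.inl a' := by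
        intro a
        rcases hx : σ (Sum.inl a) with a' | b'
        · exact ⟨a', rfl⟩
        · obtain ⟨b, hb⟩ := hgbij.surjective b'
          have : σ (Sum.inr b) = σ (Sum.inl a) := by rw [hg b, hb, hx]
          exact absurd (σ.injective this) (by simp)
      choose f hf using hall1
      have hfinj : Function.Injective f := by
        intro a a' haa'
        have : σ (Sum.inl a) = σ (Sum.inl a') := by rw [hf a, hf a', haa']
        exact Sum.inl_injective (σ.injective this)
      refine Finset.mem_image.mpr ⟨(Equiv.ofBijective f (Finite.injective_iff_bijective.mp hfinj),
        Equiv.ofBijective g hgbij), Finset.mem_univ _, ?_⟩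
      ext x
      cases x with
      | inl a => simp [Equiv.Perm.sumCongrHom, hf a]
      | inr b => simp [Equiv.Perm.sumCongrHom, hg b]
    · push_neg at hall
      obtain ⟨b, hb⟩ := hall
      have : ∃ a, σ (Sum.inr b) = Sum.inl a := by
        rcases hx : σ (Sum.inr b) with a | b'
        · exact ⟨a, rfl⟩
        · exact (hb b' hx).elim
      obtain ⟨a, ha⟩ := this
      exact Finset.prod_eq_zero (Finset.mem_univ (Sum.inr b)) (by rw [ha]; exact h a b)

theorem permanent_of_block_triangular' [CommSemiring R] (M : Matrix (α ⊕ β) (α ⊕ β) R)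
    (h : ∀ a b, M (Sum.inr b) (Sum.inl a) = 0) :
    M.permanent = (M.submatrix Sum.inl Sum.inl).permanent * (M.submatrix Sum.inr Sum.inr).permanent := by
  rw [← Matrix.permanent_transpose M, permanent_of_block_triangular Mᵀ (fun a b => h a b)]
  simp [← Matrix.transpose_submatrix, Matrix.permanent_transpose]

theorem permanent_eq_zero_pigeonhole [CommSemiring R] (M : Matrix (α ⊕ β) (α ⊕ β) R) (r : α)
    (h : ∀ (a : α) (x : α ⊕ β), M x (Sum.inl a) ≠ 0 → ∃ a', x = Sum.inl a' ∧ a' ≠ r) :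
    M.permanent = 0 := by
  rw [Matrix.permanent]
  refine Finset.sum_eq_zero fun σ _ => ?_
  by_contra h0
  have hfac : ∀ x, M (σ x) x ≠ 0 := by
    intro x hx
    exact h0 (Finset.prod_eq_zero (Finset.mem_univ x) hx)
  have : ∀ a : α, ∃ a', σ (Sum.inl a) = Sum.inl a' ∧ a' ≠ r := fun a =>
    h a (σ (Sum.inl a)) (hfac (Sum.inl a))
  choose f hf hfr using this
  have hfinj : Function.Injective f := by
    intro a a' haa'
    have : σ (Sum.inl a) = σ (Sum.inl a') := by rw [hf a, hf a', haa']
    exact Sum.inl_injective (σ.injective this)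
  have hinj2 : Function.Injective (fun a => (⟨f a, hfr a⟩ : {x : α // x ≠ r})) := by
    intro a a' haa'
    exact hfinj (congrArg Subtype.val haa')
  have hcard := Fintype.card_le_of_injective _ hinj2
  have hlt : Fintype.card {x : α // x ≠ r} < Fintype.card α :=
    Fintype.card_subtype_lt (x := r) (by simp)
  omega


/-- The embedding of `Unit ⊕ β` into `α ⊕ β` sending the unit to `r`. -/
def cutEmb (r : α) : Unit ⊕ β → α ⊕ β := Sum.elim (fun _ => Sum.inl r) Sum.inr

/-- The reindexing equivalence used in the cut lemma. -/
def cutEquiv (r : α) : ({a : α // a ≠ r} ⊕ (Unit ⊕ β)) ≃ α ⊕ β where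
  toFun x := Sum.elim (fun c => Sum.inl c.1) (cutEmb r) x
  invFun x := Sum.elim (fun a => if h : a = r then Sum.inr (Sum.inl ()) else Sum.inl ⟨a, h⟩)
    (fun b => Sum.inr (Sum.inr b)) x
  left_inv x := by
    rcases x with c | (u | b)
    · simp [cutEmb, c.2]
    · simp [cutEmb]
    · simp [cutEmb]
  right_inv x := by
    rcases x with a | b
    · by_cases h : a = r <;> simp [h, cutEmb]
    · simp [cutEmb]

/-- Schwenk-type cut-vertex decomposition for permanents. -/
theorem permanent_cut [CommRing R] (M : Matrix (α ⊕ β) (α ⊕ β) R) (r : α)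
    (h1 : ∀ a b, a ≠ r → M (Sum.inl a) (Sum.inr b) = 0)
    (h2 : ∀ a b, a ≠ r → M (Sum.inr b) (Sum.inl a) = 0) :
    M.permanent
      = (M.submatrix Sum.inl Sum.inl).permanent * (M.submatrix Sum.inr Sum.inr).permanent
      + (M.submatrix (fun c : {a : α // a ≠ r} => Sum.inl c.1)
            (fun c : {a : α // a ≠ r} => Sum.inl c.1)).permanent
        * ((M.submatrix (cutEmb r) (cutEmb r)).permanent
            - M (Sum.inl r) (Sum.inl r) * (M.submatrix Sum.inr Sum.inr).permanent) := by
  classical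
  set rr : α ⊕ β := Sum.inl r with hrr
  set u : α ⊕ β → R := fun j => if j.isLeft then M rr j else 0 with hu
  set v : α ⊕ β → R := fun j => if j.isLeft then 0 else M rr j with hv
  have huv : u + v = M rr := by
    funext j; rcases j with a | b <;> simp [hu, hv]
  set Mu := updateRow M rr u with hMu
  set Mv := updateRow M rr v with hMv
  have hsplit1 : M.permanent = Mu.permanent + Mv.permanent := by
    conv_lhs => rw [← Matrix.updateRow_eq_self M rr, ← huv]
    exact permanent_updateRow_add' M rr u v
  have eMu : ∀ x y, Mu x y = if x = rr then (if y.isLeft then M rr y else 0) else M x y := by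
    intro x y; rw [hMu, Matrix.updateRow_apply, hu]
  have eMv : ∀ x y, Mv x y = if x = rr then (if y.isLeft then 0 else M rr y) else M x y := by
    intro x y; rw [hMv, Matrix.updateRow_apply, hv]
  -- first piece
  have hMuperm : Mu.permanent
      = (M.submatrix Sum.inl Sum.inl).permanent * (M.submatrix Sum.inr Sum.inr).permanent := by
    have hcross : ∀ a b, Mu (Sum.inl a) (Sum.inr b) = 0 := by
      intro a b
      rw [eMu]
      by_cases h : (Sum.inl a : α ⊕ β) = rr
      · rw [if_pos h]; simp
      · rw [if_neg h]
        exact h1 a b (by simpa [hrr, Sum.inl.injEq] using h)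
    have hA : Mu.submatrix Sum.inl Sum.inl = M.submatrix Sum.inl Sum.inl := by
      ext a a'
      simp only [Matrix.submatrix_apply]
      rw [eMu]
      by_cases h : (Sum.inl a : α ⊕ β) = rr
      · rw [if_pos h, ← h]; simp
      · rw [if_neg h]
    have hB : Mu.submatrix Sum.inr Sum.inr = M.submatrix Sum.inr Sum.inr := by
      ext b b'
      simp only [Matrix.submatrix_apply]
      rw [eMu, if_neg (by simp [hrr])]
    rw [permanent_of_block_triangular Mu hcross, hA, hB]
  -- second split
  set cu : α ⊕ β → R := fun j => if j.isLeft then Mv j rr else 0 with hcu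
  set cv : α ⊕ β → R := fun j => if j.isLeft then 0 else Mv j rr with hcv
  have hcuv : cu + cv = fun j => Mv j rr := by
    funext j; rcases j with a | b <;> simp [hcu, hcv]
  set Mvu := updateCol Mv rr cu with hMvu0
  set Mvv := updateCol Mv rr cv with hMvv0
  have hsplit2 : Mv.permanent = Mvu.permanent + Mvv.permanent := by
    conv_lhs => rw [← Matrix.updateCol_eq_self Mv rr, ← hcuv]
    exact permanent_updateColumn_add' Mv rr cu cv
  have eMvu : ∀ x y, Mvu x y
      = if y = rr then (if x.isLeft then Mv x rr else 0)
        else (if x = rr then (if y.isLeft then 0 else M rr y) else M x y) := by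
    intro x y
    rw [hMvu0, Matrix.updateCol_apply]
    by_cases hy : y = rr
    · rw [if_pos hy, if_pos hy, hcu]
    · rw [if_neg hy, if_neg hy, eMv]
  have hMvuperm : Mvu.permanent = 0 := by
    apply permanent_eq_zero_pigeonhole _ r
    intro a x hx
    rcases x with a' | b
    · refine ⟨a', rfl, ?_⟩
      intro ha'
      apply hx
      rw [eMvu]
      have ha'r : (Sum.inl a' : α ⊕ β) = rr := by rw [ha', hrr]
      by_cases h : (Sum.inl a : α ⊕ β) = rr
      · rw [if_pos h]
        simp only [Sum.isLeft_inl, if_true]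
        rw [eMv, if_pos ha'r, hrr]
        simp
      · rw [if_neg h, if_pos ha'r]
        simp
    · exfalso
      apply hx
      rw [eMvu]
      by_cases h : (Sum.inl a : α ⊕ β) = rr
      · rw [if_pos h]; simp
      · rw [if_neg h, if_neg (by simp [hrr])]
        exact h2 a b (by simpa [hrr, Sum.inl.injEq] using h)
  have eMvv : ∀ x y, Mvv x y
      = if y = rr then (if x.isLeft then 0 else M x rr)
        else (if x = rr then (if y.isLeft then 0 else M rr y) else M x y) := by
    intro x y
    rw [hMvv0, Matrix.updateCol_apply]
    by_cases hy : y = rr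
    · rw [if_pos hy, if_pos hy, hcv]
      rcases x with a | b
      · simp
      · simp only [Sum.isLeft_inr, Bool.false_eq_true, if_false]
        rw [eMv, if_neg (by simp [hrr])]
    · rw [if_neg hy, if_neg hy, eMv]
  have hMvvperm : Mvv.permanent
      = (M.submatrix (fun c : {a : α // a ≠ r} => Sum.inl c.1)
            (fun c : {a : α // a ≠ r} => Sum.inl c.1)).permanent
        * ((M.submatrix (cutEmb r) (cutEmb r)).permanent
            - M (Sum.inl r) (Sum.inl r) * (M.submatrix Sum.inr Sum.inr).permanent) := by
    rw [← permanent_submatrix_equiv_self' (cutEquiv (β := β) r) Mvv]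
    set N := Mvv.submatrix (cutEquiv (β := β) r) (cutEquiv r) with hN
    have eN : ∀ x y, N x y = Mvv (cutEquiv (β := β) r x) (cutEquiv r y) := fun x y => rfl
    have hcross : ∀ c d, N (Sum.inl c) (Sum.inr d) = 0 := by
      intro c d
      rw [eN, eMvv]
      rcases d with _ | b
      · rw [if_pos (by simp [cutEquiv, cutEmb, hrr])]
        simp [cutEquiv]
      · rw [if_neg (by simp [cutEquiv, cutEmb]),
          if_neg (by simp [cutEquiv, cutEmb, hrr, Sum.inl.injEq, c.2])]
        simp only [cutEquiv, cutEmb]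
        exact h1 c.1 b c.2
    have hA' : N.submatrix Sum.inl Sum.inl
        = M.submatrix (fun c : {a : α // a ≠ r} => Sum.inl c.1)
            (fun c : {a : α // a ≠ r} => Sum.inl c.1) := by
      ext c c'
      simp only [Matrix.submatrix_apply]
      rw [eN, eMvv, if_neg (by simp [cutEquiv, cutEmb, hrr, Sum.inl.injEq, c'.2]),
        if_neg (by simp [cutEquiv, cutEmb, hrr, Sum.inl.injEq, c.2])]
      simp [cutEquiv, cutEmb]
    rw [permanent_of_block_triangular N hcross, hA']
    congr 1
    -- the D block
    set C := M.submatrix (cutEmb (β := β) r) (cutEmb r) with hC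
    set w0 : Unit ⊕ β → R := fun j => if j = Sum.inl () then M rr rr else 0 with hw0
    set w1 : Unit ⊕ β → R := fun j => if j = Sum.inl () then 0 else C (Sum.inl ()) j with hw1
    have hw01 : w0 + w1 = C (Sum.inl ()) := by
      funext j; rcases j with _ | b <;> simp [hw0, hw1, hC, cutEmb, hrr]
    have hCsplit : C.permanent
        = (updateRow C (Sum.inl ()) w0).permanent
          + (updateRow C (Sum.inl ()) w1).permanent := by
      conv_lhs => rw [← Matrix.updateRow_eq_self C (Sum.inl ()), ← hw01]
      exact permanent_updateRow_add' C _ w0 w1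
    have hD : N.submatrix Sum.inr Sum.inr = updateRow C (Sum.inl ()) w1 := by
      ext d d'
      rw [Matrix.updateRow_apply]
      simp only [Matrix.submatrix_apply]
      rw [eN, eMvv]
      rcases d with _ | b <;> rcases d' with _ | b' <;>
        simp [cutEquiv, cutEmb, hrr, hC, hw1]
    have hw0perm : (updateRow C (Sum.inl ()) w0).permanent
        = M rr rr * (M.submatrix Sum.inr Sum.inr).permanent := by
      have hcross0 : ∀ (a : Unit) (b : β),
          (updateRow C (Sum.inl ()) w0) (Sum.inl a) (Sum.inr b) = 0 := by
        intro a b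
        rw [Matrix.updateRow_apply, if_pos rfl, hw0]
        simp
      rw [permanent_of_block_triangular _ hcross0]
      have e1 : (((C.updateRow (Sum.inl ()) w0).submatrix Sum.inl Sum.inl)).permanent
          = M rr rr := by
        rw [Matrix.permanent_unique]
        simp [Matrix.updateRow_apply, hw0]
      have e2 : (C.updateRow (Sum.inl ()) w0).submatrix Sum.inr Sum.inr
          = M.submatrix Sum.inr Sum.inr := by
        ext b b'
        simp [Matrix.updateRow_apply, hC, cutEmb]
      rw [e1, e2]
    rw [hD, hCsplit, hw0perm, hrr]
    ring
  rw [hsplit1, hsplit2, hMuperm, hMvuperm, hMvvperm]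
  ring


open scoped Classical

/-- The graph matrix `x I - A(G)` written entrywise. -/
noncomputable def gmat {V : Type*} (G : SimpleGraph V) : Matrix V V (Polynomial ℂ) :=
  Matrix.of fun i j => if i = j then (X : Polynomial ℂ) else if G.Adj i j then -1 else 0

section gmat
variable {V W : Type*} (G : SimpleGraph V)

theorem gmat_diag (i : V) : gmat G i i = X := by
  simp [gmat]

theorem gmat_adj {i j : V} (h : G.Adj i j) : gmat G i j = -1 := by
  simp [gmat, h.ne, h]

theorem gmat_nadj {i j : V} (hne : i ≠ j) (h : ¬ G.Adj i j) : gmat G i j = 0 := by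
  simp [gmat, hne, h]

theorem permPoly_eq_gmat [Fintype V] [DecidableEq V] : permPoly G = (gmat G).permanent := by
  unfold permPoly
  congr 1
  ext i j
  letI := Classical.decRel G.Adj
  rw [Matrix.sub_apply, Matrix.smul_apply, Matrix.one_apply]
  by_cases hij : i = j
  · subst hij
    rw [if_pos rfl, gmat_diag, SimpleGraph.adjMatrix_apply, if_neg (G.irrefl), smul_eq_mul,
      mul_one, sub_zero]
  · rw [if_neg hij, smul_eq_mul, mul_zero, SimpleGraph.adjMatrix_apply]
    by_cases hadj : G.Adj i j
    · rw [if_pos hadj, gmat_adj G hadj]; ring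
    · rw [if_neg hadj, gmat_nadj G hij hadj]; ring

theorem gmat_submatrix_inj (f : W → V) (hf : Function.Injective f) (H : SimpleGraph W)
    (h : ∀ a b, H.Adj a b ↔ G.Adj (f a) (f b)) :
    (gmat G).submatrix f f = gmat H := by
  ext a b
  rw [Matrix.submatrix_apply]
  by_cases hab : a = b
  · subst hab; rw [gmat_diag, gmat_diag]
  · have hfab : f a ≠ f b := fun hc => hab (hf hc)
    by_cases hadj : H.Adj a b
    · rw [gmat_adj G ((h a b).mp hadj), gmat_adj H hadj]
    · rw [gmat_nadj G hfab (fun hc => hadj ((h a b).mpr hc)), gmat_nadj H hab hadj]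
end gmat

/-- The equivalence `V ⊕ (Fin k × V) ≃ Fin (k+1) × V`. -/
def finSuccProdEquiv (k : ℕ) (V : Type*) : V ⊕ (Fin k × V) ≃ Fin (k+1) × V where
  toFun x := Sum.elim (fun v => ((0 : Fin (k+1)), v)) (fun p => (p.1.succ, p.2)) x
  invFun p := Fin.cases (Sum.inl p.2) (fun j => Sum.inr (j, p.2)) p.1
  left_inv := by rintro (v | ⟨i, v⟩) <;> simp
  right_inv := by rintro ⟨i, v⟩; induction i using Fin.cases <;> simp

@[simp] theorem finSuccProdEquiv_inl (k : ℕ) {V : Type*} (v : V) :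
    finSuccProdEquiv k V (Sum.inl v) = ((0 : Fin (k+1)), v) := rfl

@[simp] theorem finSuccProdEquiv_inr (k : ℕ) {V : Type*} (p : Fin k × V) :
    finSuccProdEquiv k V (Sum.inr p) = (p.1.succ, p.2) := rfl

/-- Permanent of a block-diagonal matrix over `Fin k`. -/
theorem permanent_blockdiag {V : Type*} [Fintype V] [DecidableEq V] {R : Type*} [CommSemiring R]
    (N : Matrix V V R) :
    ∀ k : ℕ, (Matrix.of fun p q : Fin k × V =>
        if p.1 = q.1 then N p.2 q.2 else 0).permanent = N.permanent ^ k := by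
  intro k
  induction k with
  | zero => rw [Matrix.permanent_isEmpty, pow_zero]
  | succ k ih =>
    set M := Matrix.of fun p q : Fin (k+1) × V => if p.1 = q.1 then N p.2 q.2 else 0 with hM
    set E := finSuccProdEquiv k V with hE
    rw [← permanent_submatrix_equiv_self' E M]
    rw [permanent_of_block_triangular]
    · have h1 : (M.submatrix E E).submatrix Sum.inl Sum.inl = N := by
        ext v v'
        simp [hM, hE]
      have h2 : (M.submatrix E E).submatrix Sum.inr Sum.inr
          = Matrix.of fun p q : Fin k × V => if p.1 = q.1 then N p.2 q.2 else 0 := by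
        ext p q
        simp [hM, hE, Fin.succ_inj]
      rw [h1, h2, ih, pow_succ]
      ring
    · intro v p
      simp only [hM, hE, Matrix.submatrix_apply, finSuccProdEquiv_inl, finSuccProdEquiv_inr,
        Matrix.of_apply]
      rw [if_neg]
      exact fun h => (Fin.succ_ne_zero p.1) h.symm

section adjacency
variable {V₁ V₂ V' : Type*} (G₁ : SimpleGraph V₁) (r₁ : V₁) (G₂ : SimpleGraph V₂) (r₂ : V₂)
  (T' : SimpleGraph V') (u' : V') (k : ℕ)

theorem coalesce_adj_inl_inl (a b : V₁) :
    (coalesce G₁ r₁ G₂ r₂).Adj (Sum.inl a) (Sum.inl b) ↔ G₁.Adj a b := by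
  simp only [coalesce, SimpleGraph.fromRel_adj]
  constructor
  · rintro ⟨-, h | h⟩
    · exact h
    · exact h.symm
  · intro h
    exact ⟨by simp [h.ne], Or.inl h⟩

theorem coalesce_adj_inl_inr (a : V₁) (w : {v : V₂ // v ≠ r₂}) :
    (coalesce G₁ r₁ G₂ r₂).Adj (Sum.inl a) (Sum.inr w) ↔ a = r₁ ∧ G₂.Adj r₂ w.1 := by
  simp only [coalesce, SimpleGraph.fromRel_adj]
  constructor
  · rintro ⟨-, h | h⟩
    · exact h
    · exact h
  · intro h
    exact ⟨by simp, Or.inl h⟩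

theorem coalesce_adj_inr_inl (a : V₁) (w : {v : V₂ // v ≠ r₂}) :
    (coalesce G₁ r₁ G₂ r₂).Adj (Sum.inr w) (Sum.inl a) ↔ a = r₁ ∧ G₂.Adj r₂ w.1 := by
  simp only [coalesce, SimpleGraph.fromRel_adj]
  constructor
  · rintro ⟨-, h | h⟩
    · exact h
    · exact h
  · intro h
    exact ⟨by simp, Or.inl h⟩

theorem coalesce_adj_inr_inr (w w' : {v : V₂ // v ≠ r₂}) :
    (coalesce G₁ r₁ G₂ r₂).Adj (Sum.inr w) (Sum.inr w') ↔ G₂.Adj w.1 w'.1 := by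
  simp only [coalesce, SimpleGraph.fromRel_adj]
  constructor
  · rintro ⟨-, h | h⟩
    · exact h
    · exact h.symm
  · intro h
    refine ⟨?_, Or.inl h⟩
    simp only [ne_eq, Sum.inr.injEq]
    exact fun hc => h.ne (congrArg Subtype.val hc)

theorem starTree_adj_root_inr (p : Fin k × V') :
    (starTree k T' u').Adj (Sum.inl ()) (Sum.inr p) ↔ p.2 = u' := by
  obtain ⟨i, a⟩ := p
  simp only [starTree, SimpleGraph.fromRel_adj]
  constructor
  · rintro ⟨-, h | h⟩ <;> exact h
  · intro h
    exact ⟨by simp, Or.inl h⟩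

theorem starTree_adj_inr_root (p : Fin k × V') :
    (starTree k T' u').Adj (Sum.inr p) (Sum.inl ()) ↔ p.2 = u' := by
  obtain ⟨i, a⟩ := p
  simp only [starTree, SimpleGraph.fromRel_adj]
  constructor
  · rintro ⟨-, h | h⟩ <;> exact h
  · intro h
    exact ⟨by simp, Or.inl h⟩

theorem starTree_adj_inr_inr (p q : Fin k × V') :
    (starTree k T' u').Adj (Sum.inr p) (Sum.inr q) ↔ p.1 = q.1 ∧ T'.Adj p.2 q.2 := by
  obtain ⟨i, a⟩ := p
  obtain ⟨j, b⟩ := q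
  simp only [starTree, SimpleGraph.fromRel_adj]
  constructor
  · rintro ⟨-, ⟨h1, h2⟩ | ⟨h1, h2⟩⟩
    · exact ⟨h1, h2⟩
    · exact ⟨h1.symm, h2.symm⟩
  · rintro ⟨h1, h2⟩
    refine ⟨?_, Or.inl ⟨h1, h2⟩⟩
    simp only [ne_eq, Sum.inr.injEq, Prod.mk.injEq, not_and]
    intro _ hc
    exact (h2.ne hc).elim

theorem starTree_not_adj_root : ¬ (starTree k T' u').Adj (Sum.inl ()) (Sum.inl ()) :=
  SimpleGraph.irrefl _
end adjacency

/-- Permanent of a 2×2 matrix indexed by `Unit ⊕ Unit`. -/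
theorem permanent_two {R : Type*} [CommRing R] (M : Matrix (Unit ⊕ Unit) (Unit ⊕ Unit) R) :
    M.permanent = M (Sum.inl ()) (Sum.inl ()) * M (Sum.inr ()) (Sum.inr ())
      + M (Sum.inl ()) (Sum.inr ()) * M (Sum.inr ()) (Sum.inl ()) := by
  classical
  set w0 : Unit ⊕ Unit → R := Sum.elim (fun _ => M (Sum.inl ()) (Sum.inl ())) (fun _ => 0) with hw0
  set w1 : Unit ⊕ Unit → R := Sum.elim (fun _ => 0) (fun _ => M (Sum.inl ()) (Sum.inr ())) with hw1
  have hw01 : w0 + w1 = M (Sum.inl ()) := by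
    funext j; rcases j with u | u <;> simp [hw0, hw1]
  have hsplit : M.permanent
      = (updateRow M (Sum.inl ()) w0).permanent + (updateRow M (Sum.inl ()) w1).permanent := by
    conv_lhs => rw [← Matrix.updateRow_eq_self M (Sum.inl ()), ← hw01]
    exact permanent_updateRow_add' M _ w0 w1
  have h0 : (updateRow M (Sum.inl ()) w0).permanent
      = M (Sum.inl ()) (Sum.inl ()) * M (Sum.inr ()) (Sum.inr ()) := by
    rw [permanent_of_block_triangular]
    · rw [Matrix.permanent_unique, Matrix.permanent_unique]
      simp only [Matrix.submatrix_apply]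
      rw [Matrix.updateRow_apply, if_pos rfl, Matrix.updateRow_apply, if_neg (by simp)]
      simp [hw0]
    · intro a b
      rw [Matrix.updateRow_apply, if_pos rfl]
      simp [hw0]
  have h1 : (updateRow M (Sum.inl ()) w1).permanent
      = M (Sum.inl ()) (Sum.inr ()) * M (Sum.inr ()) (Sum.inl ()) := by
    set N := updateRow M (Sum.inl ()) w1 with hN
    have hperm : (N.submatrix (Equiv.sumComm Unit Unit) id).permanent = N.permanent :=
      Matrix.permanent_permute_cols _ N
    rw [← hperm, permanent_of_block_triangular']
    · rw [Matrix.permanent_unique, Matrix.permanent_unique]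
      simp only [Matrix.submatrix_apply, id_eq]
      rw [show ((Equiv.sumComm Unit Unit) (Sum.inl (default : Unit))) = Sum.inr () from rfl,
        show ((Equiv.sumComm Unit Unit) (Sum.inr (default : Unit))) = Sum.inl () from rfl]
      rw [hN, Matrix.updateRow_apply, if_neg (by simp), Matrix.updateRow_apply, if_pos rfl]
      simp [hw1]
      ring
    · intro a b
      simp only [Matrix.submatrix_apply, id_eq]
      rw [show ((Equiv.sumComm Unit Unit) (Sum.inr b)) = Sum.inl () from rfl]
      rw [hN, Matrix.updateRow_apply, if_pos rfl]
      simp [hw1]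
  rw [hsplit, h0, h1]

/-- The `≠ r` principal block of `gmat` is the graph matrix of the induced subgraph. -/
theorem permPoly_ne_block {V : Type*} [Fintype V] [DecidableEq V] (G : SimpleGraph V) (r : V) :
    ((gmat G).submatrix (fun c : {a : V // a ≠ r} => c.1)
        (fun c : {a : V // a ≠ r} => c.1)).permanent
      = permPoly (G.induce {v | v ≠ r}) := by
  rw [permPoly_eq_gmat]
  rw [← permanent_submatrix_equiv_self'
    (Equiv.refl _ : ↥{v : V | v ≠ r} ≃ {a : V // a ≠ r}), Matrix.submatrix_submatrix]
  congr 1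
  apply gmat_submatrix_inj
  · intro a b hab
    exact Subtype.ext (congrArg Subtype.val (Subtype.ext hab : _))
  · intro a b
    simp only [SimpleGraph.induce, SimpleGraph.comap_adj, Function.Embedding.coe_subtype,
      Function.comp_apply, Equiv.coe_refl, id_eq]

/-- The pendant graph: `T'` with one extra vertex attached at `u'`. -/
def pendant {V' : Type*} (T' : SimpleGraph V') (u' : V') : SimpleGraph (V' ⊕ Unit) :=
  SimpleGraph.fromRel fun x y =>
    match x, y with
    | .inl a, .inl b => T'.Adj a b
    | .inl a, .inr _ => a = u'
    | .inr _, .inl a => a = u'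
    | .inr _, .inr _ => False

section pendant
variable {V' : Type*} (T' : SimpleGraph V') (u' : V')

theorem pendant_adj_inl_inl (a b : V') : (pendant T' u').Adj (Sum.inl a) (Sum.inl b) ↔ T'.Adj a b := by
  simp only [pendant, SimpleGraph.fromRel_adj]
  constructor
  · rintro ⟨-, h | h⟩
    · exact h
    · exact h.symm
  · intro h
    exact ⟨by simp [h.ne], Or.inl h⟩

theorem pendant_adj_inl_inr (a : V') (u : Unit) :
    (pendant T' u').Adj (Sum.inl a) (Sum.inr u) ↔ a = u' := by
  simp only [pendant, SimpleGraph.fromRel_adj]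
  constructor
  · rintro ⟨-, h | h⟩ <;> exact h
  · intro h
    exact ⟨by simp, Or.inl h⟩

theorem pendant_adj_inr_inl (a : V') (u : Unit) :
    (pendant T' u').Adj (Sum.inr u) (Sum.inl a) ↔ a = u' := by
  simp only [pendant, SimpleGraph.fromRel_adj]
  constructor
  · rintro ⟨-, h | h⟩ <;> exact h
  · intro h
    exact ⟨by simp, Or.inl h⟩

variable [Fintype V'] [DecidableEq V']

theorem pendant_perm :
    (gmat (pendant T' u')).permanent
      = X * permPoly T' + permPoly (T'.induce {v | v ≠ u'}) := by
  have h1 : ∀ (a : V') (b : Unit), a ≠ u' →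
      gmat (pendant T' u') (Sum.inl a) (Sum.inr b) = 0 := by
    intro a b h
    exact gmat_nadj _ (by simp) (fun hc => h ((pendant_adj_inl_inr T' u' a b).mp hc))
  have h2 : ∀ (a : V') (b : Unit), a ≠ u' →
      gmat (pendant T' u') (Sum.inr b) (Sum.inl a) = 0 := by
    intro a b h
    exact gmat_nadj _ (by simp) (fun hc => h ((pendant_adj_inr_inl T' u' a b).mp hc))
  rw [permanent_cut (gmat (pendant T' u')) u' h1 h2]
  have b1 : ((gmat (pendant T' u')).submatrix Sum.inl Sum.inl) = gmat T' :=
    gmat_submatrix_inj _ Sum.inl Sum.inl_injective T' (fun a b => (pendant_adj_inl_inl T' u' a b).symm)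
  have b2 : ((gmat (pendant T' u')).submatrix Sum.inr Sum.inr).permanent = X := by
    rw [Matrix.permanent_unique, Matrix.submatrix_apply, gmat_diag]
  have b3 : ((gmat (pendant T' u')).submatrix (fun c : {a : V' // a ≠ u'} => Sum.inl c.1)
      (fun c : {a : V' // a ≠ u'} => Sum.inl c.1)).permanent
      = permPoly (T'.induce {v | v ≠ u'}) := by
    have : (gmat (pendant T' u')).submatrix (fun c : {a : V' // a ≠ u'} => Sum.inl c.1)
        (fun c : {a : V' // a ≠ u'} => Sum.inl c.1)
        = (gmat T').submatrix (fun c : {a : V' // a ≠ u'} => c.1)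
          (fun c : {a : V' // a ≠ u'} => c.1) := by
      ext c c'
      simp only [Matrix.submatrix_apply]
      rw [← b1, Matrix.submatrix_apply]
    rw [this]
    exact permPoly_ne_block T' u'
  have b4 : ((gmat (pendant T' u')).submatrix (cutEmb u') (cutEmb u')).permanent = X * X + 1 := by
    rw [permanent_two]
    simp only [Matrix.submatrix_apply]
    rw [show (cutEmb u' (Sum.inl ()) : V' ⊕ Unit) = Sum.inl u' from rfl,
      show (cutEmb u' (Sum.inr ()) : V' ⊕ Unit) = Sum.inr () from rfl]
    rw [gmat_diag, gmat_diag,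
      gmat_adj _ ((pendant_adj_inl_inr T' u' u' ()).mpr rfl),
      gmat_adj _ ((pendant_adj_inr_inl T' u' u' ()).mpr rfl)]
    ring
  rw [b1, b2, b3, b4, gmat_diag, ← permPoly_eq_gmat]
  ring

end pendant

/-- The equivalence `(Unit ⊕ V') ⊕ (Fin k × V') ≃ Unit ⊕ (Fin (k+1) × V')`. -/
def starStepEquiv (k : ℕ) (V' : Type*) :
    (Unit ⊕ V') ⊕ (Fin k × V') ≃ Unit ⊕ (Fin (k+1) × V') where
  toFun x := Sum.elim (Sum.elim (fun _ => Sum.inl ())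
    (fun a => Sum.inr ((0 : Fin (k+1)), a))) (fun p => Sum.inr (p.1.succ, p.2)) x
  invFun x := Sum.elim (fun _ => Sum.inl (Sum.inl ()))
    (fun p => Fin.cases (Sum.inl (Sum.inr p.2)) (fun j => Sum.inr (j, p.2)) p.1) x
  left_inv := by rintro ((u | a) | ⟨i, b⟩) <;> simp
  right_inv := by
    rintro (u | ⟨i, b⟩)
    · simp
    · induction i using Fin.cases <;> simp

@[simp] theorem starStepEquiv_root (k : ℕ) {V' : Type*} (u : Unit) :
    starStepEquiv k V' (Sum.inl (Sum.inl u)) = Sum.inl () := rfl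

@[simp] theorem starStepEquiv_inl_inr (k : ℕ) {V' : Type*} (a : V') :
    starStepEquiv k V' (Sum.inl (Sum.inr a)) = Sum.inr ((0 : Fin (k+1)), a) := rfl

@[simp] theorem starStepEquiv_inr (k : ℕ) {V' : Type*} (p : Fin k × V') :
    starStepEquiv k V' (Sum.inr p) = Sum.inr (p.1.succ, p.2) := rfl

/-- The subtype of the star index avoiding the root is just `V'`. -/
def neRootEquiv (W : Type*) : W ≃ {x : Unit ⊕ W // x ≠ Sum.inl ()} where
  toFun v := ⟨Sum.inr v, by simp⟩
  invFun x := match x with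
    | ⟨Sum.inl _, h⟩ => absurd rfl h
    | ⟨Sum.inr v, _⟩ => v
  left_inv v := rfl
  right_inv x := match x with
    | ⟨Sum.inl _, h⟩ => absurd rfl h
    | ⟨Sum.inr v, _⟩ => rfl

@[simp] theorem neRootEquiv_apply {W : Type*} (v : W) :
    ((neRootEquiv W v : {x : Unit ⊕ W // x ≠ Sum.inl ()}) : Unit ⊕ W) = Sum.inr v := rfl

theorem pendant_not_adj_inr_inr {V' : Type*} (T' : SimpleGraph V') (u' : V') (u v : Unit) :
    ¬ (pendant T' u').Adj (Sum.inr u) (Sum.inr v) := by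
  rintro ⟨-, h | h⟩ <;> exact h

theorem permPoly_starTree {V' : Type*} [Fintype V'] [DecidableEq V']
    (T' : SimpleGraph V') (u' : V') (k : ℕ) :
    permPoly (starTree k T' u')
      = X * permPoly T' ^ k
        + (k : Polynomial ℂ) * permPoly (T'.induce {v | v ≠ u'}) * permPoly T' ^ (k - 1) := by
  induction k with
  | zero =>
    rw [permPoly_eq_gmat,
      Matrix.permanent_eq_elem_of_card_eq_one (by simp) (Sum.inl () : Unit ⊕ Fin 0 × V'),
      gmat_diag]
    simp
  | succ k ih =>
    set M := (gmat (starTree (k+1) T' u')).submatrix (starStepEquiv k V') (starStepEquiv k V')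
      with hM
    have hperm : permPoly (starTree (k+1) T' u') = M.permanent := by
      rw [permPoly_eq_gmat, hM, permanent_submatrix_equiv_self']
    have h1 : ∀ (a : Unit ⊕ V') (b : Fin k × V'), a ≠ Sum.inl () →
        M (Sum.inl a) (Sum.inr b) = 0 := by
      rintro (u | v) p h
      · exact absurd rfl h
      · rw [hM, Matrix.submatrix_apply, starStepEquiv_inl_inr, starStepEquiv_inr]
        apply gmat_nadj
        · intro hc
          rw [Sum.inr.injEq, Prod.mk.injEq] at hc
          exact (Fin.succ_ne_zero p.1) hc.1.symm
        · intro hc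
          rw [starTree_adj_inr_inr] at hc
          exact (Fin.succ_ne_zero p.1) hc.1.symm
    have h2 : ∀ (a : Unit ⊕ V') (b : Fin k × V'), a ≠ Sum.inl () →
        M (Sum.inr b) (Sum.inl a) = 0 := by
      rintro (u | v) p h
      · exact absurd rfl h
      · rw [hM, Matrix.submatrix_apply, starStepEquiv_inl_inr, starStepEquiv_inr]
        apply gmat_nadj
        · intro hc
          rw [Sum.inr.injEq, Prod.mk.injEq] at hc
          exact (Fin.succ_ne_zero p.1) hc.1
        · intro hc
          rw [starTree_adj_inr_inr] at hc
          exact (Fin.succ_ne_zero p.1) hc.1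
    have b1 : (M.submatrix Sum.inl Sum.inl).permanent
        = X * permPoly T' + permPoly (T'.induce {v | v ≠ u'}) := by
      have b1m : M.submatrix Sum.inl Sum.inl
          = (gmat (pendant T' u')).submatrix (Equiv.sumComm Unit V') (Equiv.sumComm Unit V') := by
        refine Matrix.ext fun x y => ?_
        simp only [hM, Matrix.submatrix_apply]
        obtain u1 | v1 := x <;> obtain u2 | v2 := y
        · cases u1; cases u2
          simp only [Equiv.sumComm_apply, Sum.swap_inl]
          rw [gmat_diag, gmat_diag]
        · cases u1
          simp only [starStepEquiv_root, starStepEquiv_inl_inr, Equiv.sumComm_apply,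
            Sum.swap_inl, Sum.swap_inr]
          by_cases hv : v2 = u'
          · rw [gmat_adj _ ((starTree_adj_root_inr T' u' (k+1) (0, v2)).mpr hv),
              gmat_adj _ ((pendant_adj_inr_inl T' u' v2 ()).mpr hv)]
          · rw [gmat_nadj _ (by simp) (fun hc => hv ((starTree_adj_root_inr T' u' (k+1) (0, v2)).mp hc)),
              gmat_nadj _ (by simp) (fun hc => hv ((pendant_adj_inr_inl T' u' v2 ()).mp hc))]
        · cases u2
          simp only [starStepEquiv_root, starStepEquiv_inl_inr, Equiv.sumComm_apply,
            Sum.swap_inl, Sum.swap_inr]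
          by_cases hv : v1 = u'
          · rw [gmat_adj _ ((starTree_adj_inr_root T' u' (k+1) (0, v1)).mpr hv),
              gmat_adj _ ((pendant_adj_inl_inr T' u' v1 ()).mpr hv)]
          · rw [gmat_nadj _ (by simp) (fun hc => hv ((starTree_adj_inr_root T' u' (k+1) (0, v1)).mp hc)),
              gmat_nadj _ (by simp) (fun hc => hv ((pendant_adj_inl_inr T' u' v1 ()).mp hc))]
        · simp only [starStepEquiv_inl_inr, Equiv.sumComm_apply, Sum.swap_inr]
          by_cases hv : v1 = v2
          · subst hv
            rw [gmat_diag, gmat_diag]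
          · by_cases hadj : T'.Adj v1 v2
            · rw [gmat_adj _ ((starTree_adj_inr_inr T' u' (k+1) (0, v1) (0, v2)).mpr ⟨rfl, hadj⟩),
                gmat_adj _ ((pendant_adj_inl_inl T' u' v1 v2).mpr hadj)]
            · rw [gmat_nadj _ (by simp [hv])
                  (fun hc => hadj ((starTree_adj_inr_inr T' u' (k+1) (0, v1) (0, v2)).mp hc).2),
                gmat_nadj _ (by simp [hv])
                  (fun hc => hadj ((pendant_adj_inl_inl T' u' v1 v2).mp hc))]
      rw [b1m, permanent_submatrix_equiv_self', pendant_perm]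
    have b2 : (M.submatrix Sum.inr Sum.inr).permanent = permPoly T' ^ k := by
      have b2m : M.submatrix Sum.inr Sum.inr
          = Matrix.of fun p q : Fin k × V' => if p.1 = q.1 then gmat T' p.2 q.2 else 0 := by
        refine Matrix.ext fun p q => ?_
        simp only [hM, Matrix.submatrix_apply, starStepEquiv_inr, Matrix.of_apply]
        by_cases hpq : p = q
        · subst hpq
          rw [if_pos rfl, gmat_diag, gmat_diag]
        · by_cases h1' : p.1 = q.1
          · rw [if_pos h1']
            have hsnd : p.2 ≠ q.2 := fun hc => hpq (Prod.ext h1' hc)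
            by_cases hadj : T'.Adj p.2 q.2
            · rw [gmat_adj _ ((starTree_adj_inr_inr T' u' (k+1) _ _).mpr ⟨by rw [h1'], hadj⟩),
                gmat_adj _ hadj]
            · rw [gmat_nadj _ (by simp [hsnd]) (fun hc =>
                  hadj ((starTree_adj_inr_inr T' u' (k+1) _ _).mp hc).2),
                gmat_nadj _ hsnd hadj]
          · rw [if_neg h1']
            apply gmat_nadj
            · simp only [ne_eq, Sum.inr.injEq, Prod.mk.injEq, not_and]
              intro hc
              exact absurd (Fin.succ_inj.mp hc) h1'
            · intro hc
              exact h1' (Fin.succ_inj.mp ((starTree_adj_inr_inr T' u' (k+1) _ _).mp hc).1)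
      rw [b2m, permanent_blockdiag, permPoly_eq_gmat]
    have b3 : (M.submatrix (fun c : {x : Unit ⊕ V' // x ≠ Sum.inl ()} => Sum.inl c.1)
        (fun c : {x : Unit ⊕ V' // x ≠ Sum.inl ()} => Sum.inl c.1)).permanent
        = permPoly T' := by
      rw [← permanent_submatrix_equiv_self' (neRootEquiv V'), Matrix.submatrix_submatrix,
        hM, Matrix.submatrix_submatrix, permPoly_eq_gmat]
      congr 1
      apply gmat_submatrix_inj
      · intro a b hab
        simp only [Function.comp_apply, neRootEquiv_apply, starStepEquiv_inl_inr,
          Sum.inr.injEq, Prod.mk.injEq] at hab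
        exact hab.2
      · intro a b
        simp only [Function.comp_apply, neRootEquiv_apply, starStepEquiv_inl_inr]
        rw [starTree_adj_inr_inr]
        simp
    have b4 : (M.submatrix (cutEmb (Sum.inl ())) (cutEmb (Sum.inl ()))).permanent
        = permPoly (starTree k T' u') := by
      rw [hM, Matrix.submatrix_submatrix, permPoly_eq_gmat]
      congr 1
      apply gmat_submatrix_inj
      · rintro (u | p) (u' | q) hab
        · rfl
        · rw [Function.comp_apply, Function.comp_apply] at hab
          simp only [cutEmb, Sum.elim_inl, Sum.elim_inr, starStepEquiv_root,
            starStepEquiv_inr] at hab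
          exact absurd hab (by simp)
        · rw [Function.comp_apply, Function.comp_apply] at hab
          simp only [cutEmb, Sum.elim_inl, Sum.elim_inr, starStepEquiv_root,
            starStepEquiv_inr] at hab
          exact absurd hab (by simp)
        · rw [Function.comp_apply, Function.comp_apply] at hab
          simp only [cutEmb, Sum.elim_inl, Sum.elim_inr, starStepEquiv_inr] at hab
          rw [Sum.inr.injEq, Prod.mk.injEq] at hab
          rw [Prod.ext (Fin.succ_inj.mp hab.1) hab.2]
      · rintro (u | p) (u' | q)
        · constructor
          · intro hc
            exact absurd hc (SimpleGraph.irrefl _)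
          · intro hc
            simp only [Function.comp_apply, cutEmb, Sum.elim_inl, starStepEquiv_root] at hc
            exact absurd hc (SimpleGraph.irrefl _)
        · simp only [Function.comp_apply, cutEmb, Sum.elim_inl, Sum.elim_inr,
            starStepEquiv_root, starStepEquiv_inr]
          rw [starTree_adj_root_inr, starTree_adj_root_inr]
        · simp only [Function.comp_apply, cutEmb, Sum.elim_inl, Sum.elim_inr,
            starStepEquiv_root, starStepEquiv_inr]
          rw [starTree_adj_inr_root, starTree_adj_inr_root]
        · simp only [Function.comp_apply, cutEmb, Sum.elim_inr, starStepEquiv_inr]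
          rw [starTree_adj_inr_inr, starTree_adj_inr_inr, Fin.succ_inj]
    have hdiag : M (Sum.inl (Sum.inl ())) (Sum.inl (Sum.inl ())) = X := by
      rw [hM, Matrix.submatrix_apply, starStepEquiv_root, gmat_diag]
    rw [hperm, permanent_cut M (Sum.inl ()) h1 h2, b1, b2, b3, b4, hdiag, ih]
    rcases k with _ | m
    · push_cast
      ring
    · push_cast [Nat.add_sub_cancel]
      ring

theorem permPoly_coalesce_eq {V₁ V' : Type*} [Fintype V₁] [DecidableEq V₁] [Fintype V']
    [DecidableEq V'] (G₁ : SimpleGraph V₁) (r₁ : V₁) (T' : SimpleGraph V') (u' : V') (k : ℕ) :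
    permPoly (coalesce G₁ r₁ (starTree k T' u') (Sum.inl ()))
      = permPoly G₁ * permPoly T' ^ k
        + permPoly (G₁.induce {v | v ≠ r₁}) *
            ((k : Polynomial ℂ) * permPoly (T'.induce {v | v ≠ u'}) * permPoly T' ^ (k-1)) := by
  classical
  set St := starTree k T' u' with hSt
  set M := gmat (coalesce G₁ r₁ St (Sum.inl ())) with hMdef
  have h1 : ∀ (a : V₁) (b : {v : Unit ⊕ Fin k × V' // v ≠ Sum.inl ()}), a ≠ r₁ →
      M (Sum.inl a) (Sum.inr b) = 0 := by
    intro a b h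
    apply gmat_nadj _ (by simp)
    rw [coalesce_adj_inl_inr]
    rintro ⟨rfl, -⟩
    exact h rfl
  have h2 : ∀ (a : V₁) (b : {v : Unit ⊕ Fin k × V' // v ≠ Sum.inl ()}), a ≠ r₁ →
      M (Sum.inr b) (Sum.inl a) = 0 := by
    intro a b h
    apply gmat_nadj _ (by simp)
    rw [coalesce_adj_inr_inl]
    rintro ⟨rfl, -⟩
    exact h rfl
  have hA : M.submatrix Sum.inl Sum.inl = gmat G₁ :=
    gmat_submatrix_inj _ Sum.inl Sum.inl_injective G₁
      (fun a b => (coalesce_adj_inl_inl G₁ r₁ St (Sum.inl ()) a b).symm)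
  have hB : (M.submatrix Sum.inr Sum.inr).permanent = permPoly T' ^ k := by
    rw [← permanent_submatrix_equiv_self' (neRootEquiv (Fin k × V')),
      Matrix.submatrix_submatrix]
    have hBm : M.submatrix (Sum.inr ∘ (neRootEquiv (Fin k × V'))) (Sum.inr ∘ (neRootEquiv (Fin k × V')))
        = Matrix.of fun p q : Fin k × V' => if p.1 = q.1 then gmat T' p.2 q.2 else 0 := by
      refine Matrix.ext fun p q => ?_
      simp only [hMdef, Matrix.submatrix_apply, Function.comp_apply, Matrix.of_apply]
      have hadjiff : ∀ p q : Fin k × V',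
          (coalesce G₁ r₁ St (Sum.inl ())).Adj (Sum.inr (neRootEquiv (Fin k × V') p))
            (Sum.inr (neRootEquiv (Fin k × V') q)) ↔ p.1 = q.1 ∧ T'.Adj p.2 q.2 := by
        intro p q
        rw [coalesce_adj_inr_inr, neRootEquiv_apply, neRootEquiv_apply, hSt,
          starTree_adj_inr_inr]
      by_cases hpq : p = q
      · subst hpq
        rw [if_pos rfl, gmat_diag, gmat_diag]
      · have hne : (Sum.inr (neRootEquiv (Fin k × V') p) : V₁ ⊕ _)
            ≠ Sum.inr (neRootEquiv (Fin k × V') q) := by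
          simp only [ne_eq, Sum.inr.injEq]
          intro hc
          apply hpq
          have := congrArg Subtype.val hc
          rw [neRootEquiv_apply, neRootEquiv_apply] at this
          exact Sum.inr_injective this
        by_cases h1' : p.1 = q.1
        · rw [if_pos h1']
          have hsnd : p.2 ≠ q.2 := fun hc => hpq (Prod.ext h1' hc)
          by_cases hadj : T'.Adj p.2 q.2
          · rw [gmat_adj T' hadj]
            exact gmat_adj _ ((hadjiff p q).mpr ⟨h1', hadj⟩)
          · rw [gmat_nadj T' hsnd hadj]
            exact gmat_nadj _ hne (fun hc => hadj ((hadjiff p q).mp hc).2)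
        · rw [if_neg h1']
          exact gmat_nadj _ hne (fun hc => h1' ((hadjiff p q).mp hc).1)
    rw [hBm, permanent_blockdiag, permPoly_eq_gmat]
  have hA' : (M.submatrix (fun c : {a : V₁ // a ≠ r₁} => Sum.inl c.1)
      (fun c : {a : V₁ // a ≠ r₁} => Sum.inl c.1)).permanent
      = permPoly (G₁.induce {v | v ≠ r₁}) := by
    have : M.submatrix (fun c : {a : V₁ // a ≠ r₁} => Sum.inl c.1)
        (fun c : {a : V₁ // a ≠ r₁} => Sum.inl c.1)
        = (gmat G₁).submatrix (fun c : {a : V₁ // a ≠ r₁} => c.1)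
          (fun c : {a : V₁ // a ≠ r₁} => c.1) := by
      refine Matrix.ext fun c c' => ?_
      simp only [Matrix.submatrix_apply]
      rw [← hA, Matrix.submatrix_apply]
    rw [this]
    exact permPoly_ne_block G₁ r₁
  have hC : (M.submatrix (cutEmb r₁) (cutEmb r₁)).permanent = permPoly St := by
    rw [← permanent_submatrix_equiv_self'
      (Equiv.sumCongr (Equiv.refl Unit) (neRootEquiv (Fin k × V'))),
      Matrix.submatrix_submatrix, permPoly_eq_gmat]
    congr 1
    apply gmat_submatrix_inj
    · rintro (u | p) (u2 | q) hab <;>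
        simp only [Function.comp_apply, Equiv.sumCongr_apply, Sum.map_inl, Sum.map_inr,
          Equiv.coe_refl, id_eq, cutEmb, Sum.elim_inl, Sum.elim_inr] at hab
      · rfl
      · exact absurd hab (by simp)
      · exact absurd hab (by simp)
      · rw [Sum.inr.injEq] at hab
        have := congrArg Subtype.val hab
        rw [neRootEquiv_apply, neRootEquiv_apply] at this
        rw [Sum.inr_injective this]
    · rintro (u | p) (u2 | q) <;>
        simp only [Function.comp_apply, Equiv.sumCongr_apply, Sum.map_inl, Sum.map_inr,
          Equiv.coe_refl, id_eq, cutEmb, Sum.elim_inl, Sum.elim_inr]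
      · constructor
        · intro hc
          exact absurd hc (SimpleGraph.irrefl _)
        · intro hc
          exact absurd hc (SimpleGraph.irrefl _)
      · rw [coalesce_adj_inl_inr, neRootEquiv_apply]
        cases u
        constructor
        · intro hc
          exact ⟨rfl, hc⟩
        · rintro ⟨-, hc⟩
          exact hc
      · rw [coalesce_adj_inr_inl, neRootEquiv_apply]
        cases u2
        constructor
        · intro hc
          exact ⟨rfl, hc.symm⟩
        · rintro ⟨-, hc⟩
          exact hc.symm
      · rw [coalesce_adj_inr_inr, neRootEquiv_apply, neRootEquiv_apply]
  have hdiag : M (Sum.inl r₁) (Sum.inl r₁) = X := gmat_diag _ _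
  rw [permPoly_eq_gmat, ← hMdef, permanent_cut M r₁ h1 h2, hA, hB, hA', hC, hdiag,
    ← permPoly_eq_gmat, hSt, permPoly_starTree]
  ring

theorem permPoly_monic {V : Type*} [Fintype V] [DecidableEq V] (G : SimpleGraph V) :
    (permPoly G).Monic := by
  classical
  rcases isEmpty_or_nonempty V with hV | hV
  · rw [permPoly_eq_gmat, Matrix.permanent_isEmpty]
    exact monic_one
  · set n := Fintype.card V with hn
    have hn1 : 1 ≤ n := Fintype.card_pos
    rw [permPoly_eq_gmat, Matrix.permanent,
      ← Finset.add_sum_erase _ _ (Finset.mem_univ (1 : Equiv.Perm V))]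
    have hid : (∏ i, gmat G ((1 : Equiv.Perm V) i) i) = X ^ n := by
      have : ∀ i, gmat G ((1 : Equiv.Perm V) i) i = X := fun i => gmat_diag G i
      rw [Finset.prod_congr rfl (fun i _ => this i), Finset.prod_const, Finset.card_univ]
    rw [hid]
    apply Polynomial.monic_X_pow_add
    apply lt_of_le_of_lt (Polynomial.degree_sum_le _ _)
    have hbot : (⊥ : WithBot ℕ) < (n : WithBot ℕ) := by
      exact_mod_cast WithBot.bot_lt_coe n
    rw [Finset.sup_lt_iff hbot]
    intro σ hσ
    have hσ1 : σ ≠ 1 := Finset.ne_of_mem_erase hσ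
    obtain ⟨i₀, hi₀⟩ : ∃ i, σ i ≠ i := by
      by_contra hc
      push_neg at hc
      exact hσ1 (Equiv.ext hc)
    by_cases hzero : (∏ i, gmat G (σ i) i) = 0
    · rw [hzero, Polynomial.degree_zero]
      exact hbot
    · rw [Polynomial.degree_eq_natDegree hzero, Nat.cast_lt]
      have hd : (∏ i, gmat G (σ i) i).natDegree ≤ ∑ i, if σ i = i then 1 else 0 := by
        refine le_trans (Polynomial.natDegree_prod_le _ _) (Finset.sum_le_sum fun i _ => ?_)
        by_cases hfix : σ i = i
        · rw [if_pos hfix, hfix, gmat_diag]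
          exact le_of_eq Polynomial.natDegree_X
        · rw [if_neg hfix]
          by_cases hadj : G.Adj (σ i) i
          · rw [gmat_adj _ hadj]
            simp
          · rw [gmat_nadj _ hfix hadj]
            simp
      have hcard : (∑ i, if σ i = i then 1 else 0) = (Finset.univ.filter fun i => σ i = i).card :=
        (Finset.card_filter _ _).symm
      have hsub : (Finset.univ.filter fun i => σ i = i)
          ⊆ (Finset.univ.erase i₀).erase (σ i₀) := by
        intro i hi
        rw [Finset.mem_filter] at hi
        refine Finset.mem_erase.mpr ⟨?_, Finset.mem_erase.mpr ⟨?_, Finset.mem_univ i⟩⟩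
        · rintro rfl
          exact hi₀ (σ.injective (hi.2 ▸ hi.2))
        · rintro rfl
          exact hi₀ hi.2
      have hcard2 : ((Finset.univ.erase i₀).erase (σ i₀)).card = n - 2 := by
        rw [Finset.card_erase_of_mem (Finset.mem_erase.mpr ⟨hi₀, Finset.mem_univ _⟩),
          Finset.card_erase_of_mem (Finset.mem_univ _), Finset.card_univ, ← hn]
        omega
      have := Finset.card_le_card hsub
      omega

theorem permPoly_ne_zero {V : Type*} [Fintype V] [DecidableEq V] (G : SimpleGraph V) :
    permPoly G ≠ 0 :=
  (permPoly_monic G).ne_zero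

/-- Build a walk along a sequence of adjacent vertices. -/
def buildWalk {V : Type*} (G : SimpleGraph V) (f : ℕ → V)
    (hadj : ∀ m, G.Adj (f (m+1)) (f m)) : ∀ m : ℕ, G.Walk (f m) (f 0)
  | 0 => SimpleGraph.Walk.nil
  | (m+1) => SimpleGraph.Walk.cons (hadj m) (buildWalk G f hadj m)

theorem buildWalk_support {V : Type*} (G : SimpleGraph V) (f : ℕ → V)
    (hadj : ∀ m, G.Adj (f (m+1)) (f m)) :
    ∀ m x, x ∈ (buildWalk G f hadj m).support ↔ ∃ j ≤ m, x = f j := by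
  intro m
  induction m with
  | zero =>
    intro x
    simp [buildWalk]
  | succ m ih =>
    intro x
    rw [show buildWalk G f hadj (m+1) = SimpleGraph.Walk.cons (hadj m) (buildWalk G f hadj m)
      from rfl, SimpleGraph.Walk.support_cons]
    simp only [List.mem_cons, ih]
    constructor
    · rintro (rfl | ⟨j, hj, rfl⟩)
      · exact ⟨m+1, le_refl _, rfl⟩
      · exact ⟨j, le_trans hj (Nat.le_succ m), rfl⟩
    · rintro ⟨j, hj, rfl⟩
      rcases Nat.eq_or_lt_of_le hj with rfl | hlt
      · exact Or.inl rfl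
      · exact Or.inr ⟨j, Nat.lt_succ_iff.mp hlt, rfl⟩

theorem buildWalk_length {V : Type*} (G : SimpleGraph V) (f : ℕ → V)
    (hadj : ∀ m, G.Adj (f (m+1)) (f m)) :
    ∀ m, (buildWalk G f hadj m).length = m := by
  intro m
  induction m with
  | zero => rfl
  | succ m ih =>
    rw [show buildWalk G f hadj (m+1) = SimpleGraph.Walk.cons (hadj m) (buildWalk G f hadj m)
      from rfl, SimpleGraph.Walk.length_cons, ih]

theorem invol_of_acyclic {V : Type*} [Fintype V] [DecidableEq V] (G : SimpleGraph V)
    (hG : G.IsAcyclic) (σ : Equiv.Perm V) (hs : ∀ i, σ i ≠ i → G.Adj (σ i) i) :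
    ∀ i, σ (σ i) = i := by
  intro i
  by_cases hfix : σ i = i
  · rw [hfix, hfix]
  by_contra hcon
  have hiter : ∀ m : ℕ, σ (σ^[m] i) ≠ σ^[m] i := by
    intro m hc
    apply hfix
    have h1 : σ^[m] (σ i) = σ^[m] i := by
      rw [← Function.iterate_succ_apply, Function.iterate_succ_apply']
      exact hc
    exact (Function.Injective.iterate σ.injective m) h1
  have hadj : ∀ m : ℕ, G.Adj (σ^[m+1] i) (σ^[m] i) := by
    intro m
    rw [Function.iterate_succ_apply']
    exact hs _ (hiter m)
  have hper : i ∈ Function.periodicPts ⇑σ := by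
    refine ⟨orderOf σ, orderOf_pos σ, ?_⟩
    show σ^[orderOf σ] i = i
    rw [Equiv.Perm.iterate_eq_pow, pow_orderOf_eq_one σ]
    simp
  set p := Function.minimalPeriod ⇑σ i with hp
  have hp0 : 0 < p := Function.minimalPeriod_pos_of_mem_periodicPts hper
  have hpp : σ^[p] i = i := Function.iterate_minimalPeriod
  have hp1 : p ≠ 1 := by
    intro h
    rw [h] at hpp
    exact hfix hpp
  have hp2 : p ≠ 2 := by
    intro h
    rw [h] at hpp
    rw [show σ^[2] i = σ (σ i) from by rw [Function.iterate_succ_apply', Function.iterate_one]]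
      at hpp
    exact hcon hpp
  have hp3 : 3 ≤ p := by omega
  have hnodup : ∀ m, m < p → (buildWalk G (fun n => σ^[n] i) hadj m).support.Nodup := by
    intro m
    induction m with
    | zero => intro _; simp [buildWalk]
    | succ m ih =>
      intro hm
      rw [show buildWalk G (fun n => σ^[n] i) hadj (m+1)
        = SimpleGraph.Walk.cons (hadj m) (buildWalk G (fun n => σ^[n] i) hadj m) from rfl,
        SimpleGraph.Walk.support_cons, List.nodup_cons]
      refine ⟨?_, ih (by omega)⟩
      intro hmem
      obtain ⟨j, hj, hje⟩ := (buildWalk_support G _ hadj m _).mp hmem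
      have := Function.iterate_injOn_Iio_minimalPeriod (f := ⇑σ) (x := i)
        (Set.mem_Iio.mpr hm) (Set.mem_Iio.mpr (by omega : j < p)) hje
      omega
  have hWpath : (buildWalk G (fun n => σ^[n] i) hadj (p-1)).IsPath :=
    SimpleGraph.Walk.IsPath.mk' (hnodup (p-1) (by omega))
  have hedge : G.Adj (σ^[p-1] i) i := by
    have h := hadj (p-1)
    rw [show p - 1 + 1 = p from by omega, hpp] at h
    exact h.symm
  have hP1 : (⟨buildWalk G (fun n => σ^[n] i) hadj (p-1), hWpath⟩ :
      G.Path (σ^[p-1] i) (σ^[0] i)) = SimpleGraph.Path.singleton hedge := by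
    exact SimpleGraph.isAcyclic_iff_path_unique.mp hG _ _
  have hlen := congrArg (fun q : G.Path (σ^[p-1] i) (σ^[0] i) => q.1.length) hP1
  simp only [SimpleGraph.Path.singleton] at hlen
  rw [buildWalk_length] at hlen
  change p - 1 = 0 + 1 at hlen
  omega

/-- The matrix `x I - i A(G)`. -/
noncomputable def gmatI {V : Type*} (G : SimpleGraph V) : Matrix V V (Polynomial ℂ) :=
  Matrix.of fun i j => if i = j then (X : Polynomial ℂ)
    else if G.Adj i j then Polynomial.C (-Complex.I) else 0

section gmatI
variable {V : Type*} (G : SimpleGraph V)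

theorem gmatI_diag (i : V) : gmatI G i i = X := by simp [gmatI]

theorem gmatI_adj {i j : V} (h : G.Adj i j) : gmatI G i j = Polynomial.C (-Complex.I) := by
  simp [gmatI, h.ne, h]

theorem gmatI_nadj {i j : V} (hne : i ≠ j) (h : ¬ G.Adj i j) : gmatI G i j = 0 := by
  simp [gmatI, hne, h]
end gmatI

theorem invol_term {V : Type*} [Fintype V] [DecidableEq V] (G : SimpleGraph V) :
    ∀ n (σ : Equiv.Perm V), (Finset.univ.filter fun i => σ i ≠ i).card = n →
      (∀ i, σ (σ i) = i) → (∀ i, σ i ≠ i → G.Adj (σ i) i) →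
      ((Equiv.Perm.sign σ : ℤ) : Polynomial ℂ) * ∏ i, gmatI G (σ i) i
        = ∏ i, gmat G (σ i) i := by
  intro n
  induction n using Nat.strong_induction_on with
  | _ n ih =>
    intro σ hcard hinv hs
    rcases eq_or_ne σ 1 with rfl | hσ1
    · rw [Equiv.Perm.sign_one]
      have h1 : ∀ i : V, gmatI G ((1 : Equiv.Perm V) i) i = X := fun i => gmatI_diag G i
      have h2 : ∀ i : V, gmat G ((1 : Equiv.Perm V) i) i = X := fun i => gmat_diag G i
      rw [Finset.prod_congr rfl (fun i _ => h1 i), Finset.prod_congr rfl (fun i _ => h2 i)]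
      simp
    · obtain ⟨i₀, hi₀⟩ : ∃ i, σ i ≠ i := by
        by_contra hc
        push_neg at hc
        exact hσ1 (Equiv.ext hc)
      set j₀ := σ i₀ with hj₀
      have hji : σ j₀ = i₀ := hinv i₀
      have hadj0 : G.Adj j₀ i₀ := hs i₀ hi₀
      have hne0 : j₀ ≠ i₀ := hi₀
      set σ' := σ * Equiv.swap i₀ j₀ with hσ'
      have hσ'i₀ : σ' i₀ = i₀ := by
        rw [hσ', Equiv.Perm.mul_apply, Equiv.swap_apply_left]
        exact hji
      have hσ'j₀ : σ' j₀ = j₀ := by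
        rw [hσ', Equiv.Perm.mul_apply, Equiv.swap_apply_right]
      have hσ'other : ∀ x, x ≠ i₀ → x ≠ j₀ → σ' x = σ x := by
        intro x h1 h2
        rw [hσ', Equiv.Perm.mul_apply, Equiv.swap_apply_of_ne_of_ne h1 h2]
      have hσxne : ∀ x, x ≠ i₀ → x ≠ j₀ → σ x ≠ i₀ ∧ σ x ≠ j₀ := by
        intro x h1 h2
        constructor
        · intro hc
          exact h2 (σ.injective (hc.trans hji.symm))
        · intro hc
          exact h1 (σ.injective (hc.trans hj₀))
      have hinv' : ∀ x, σ' (σ' x) = x := by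
        intro x
        by_cases h1 : x = i₀
        · rw [h1, hσ'i₀, hσ'i₀]
        by_cases h2 : x = j₀
        · rw [h2, hσ'j₀, hσ'j₀]
        rw [hσ'other x h1 h2]
        obtain ⟨hx1, hx2⟩ := hσxne x h1 h2
        rw [hσ'other _ hx1 hx2]
        exact hinv x
      have hs' : ∀ x, σ' x ≠ x → G.Adj (σ' x) x := by
        intro x hx
        by_cases h1 : x = i₀
        · rw [h1, hσ'i₀] at hx
          exact absurd rfl hx
        by_cases h2 : x = j₀
        · rw [h2, hσ'j₀] at hx
          exact absurd rfl hx
        rw [hσ'other x h1 h2] at hx ⊢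
        exact hs x hx
      -- cardinality decreases
      have hmemi₀ : i₀ ∈ Finset.univ.filter fun i => σ i ≠ i := by
        rw [Finset.mem_filter]
        exact ⟨Finset.mem_univ _, hi₀⟩
      have hmemj₀ : j₀ ∈ (Finset.univ.filter fun i => σ i ≠ i).erase i₀ := by
        rw [Finset.mem_erase, Finset.mem_filter]
        refine ⟨hne0, Finset.mem_univ _, ?_⟩
        rw [hji]
        exact fun hc => hi₀ hc.symm
      have hsub : (Finset.univ.filter fun i => σ' i ≠ i)
          ⊆ ((Finset.univ.filter fun i => σ i ≠ i).erase i₀).erase j₀ := by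
        intro x hx
        rw [Finset.mem_filter] at hx
        have h1 : x ≠ i₀ := by
          rintro rfl
          exact hx.2 hσ'i₀
        have h2 : x ≠ j₀ := by
          rintro rfl
          exact hx.2 hσ'j₀
        rw [Finset.mem_erase, Finset.mem_erase, Finset.mem_filter]
        refine ⟨h2, h1, Finset.mem_univ _, ?_⟩
        rw [← hσ'other x h1 h2]
        exact hx.2
      have hcard' : (Finset.univ.filter fun i => σ' i ≠ i).card < n := by
        have hle := Finset.card_le_card hsub
        rw [Finset.card_erase_of_mem hmemj₀, Finset.card_erase_of_mem hmemi₀, hcard] at hle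
        have hn2 : 2 ≤ n := by
          rw [← hcard]
          have : {i₀, j₀} ⊆ Finset.univ.filter fun i => σ i ≠ i := by
            intro x hx
            rw [Finset.mem_insert, Finset.mem_singleton] at hx
            rcases hx with rfl | rfl
            · exact hmemi₀
            · exact Finset.mem_of_mem_erase hmemj₀
          have h2 := Finset.card_le_card this
          rw [Finset.card_insert_of_notMem (by simp [hne0.symm]), Finset.card_singleton] at h2
          exact h2
        omega
      have hIH := ih _ hcard' σ' rfl hinv' hs'
      -- split products
      have hmemj₀u : j₀ ∈ Finset.univ.erase i₀ :=
        Finset.mem_erase.mpr ⟨hne0, Finset.mem_univ _⟩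
      have hsplit : ∀ f : V → Polynomial ℂ,
          ∏ i, f i = f i₀ * (f j₀ * ∏ i ∈ (Finset.univ.erase i₀).erase j₀, f i) := by
        intro f
        rw [← Finset.mul_prod_erase Finset.univ f (Finset.mem_univ i₀),
          ← Finset.mul_prod_erase (Finset.univ.erase i₀) f hmemj₀u]
      have hrest : ∀ (N : Matrix V V (Polynomial ℂ)),
          ∏ i ∈ (Finset.univ.erase i₀).erase j₀, N (σ' i) i
            = ∏ i ∈ (Finset.univ.erase i₀).erase j₀, N (σ i) i := by
        intro N
        refine Finset.prod_congr rfl fun i hi => ?_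
        rw [Finset.mem_erase, Finset.mem_erase] at hi
        rw [hσ'other i hi.2.1 hi.1]
      set RI := ∏ i ∈ (Finset.univ.erase i₀).erase j₀, gmatI G (σ i) i with hRI
      set Rg := ∏ i ∈ (Finset.univ.erase i₀).erase j₀, gmat G (σ i) i with hRg
      have eI : ∏ i, gmatI G (σ i) i
          = Polynomial.C (-Complex.I) * (Polynomial.C (-Complex.I) * RI) := by
        rw [hsplit (fun i => gmatI G (σ i) i), ← hj₀, gmatI_adj G hadj0, hji,
          gmatI_adj G hadj0.symm]
      have eg : ∏ i, gmat G (σ i) i = (-1) * ((-1) * Rg) := by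
        rw [hsplit (fun i => gmat G (σ i) i), ← hj₀, gmat_adj G hadj0, hji,
          gmat_adj G hadj0.symm]
      have eI' : ∏ i, gmatI G (σ' i) i = X * (X * RI) := by
        rw [hsplit (fun i => gmatI G (σ' i) i), hσ'i₀, hσ'j₀, gmatI_diag, gmatI_diag,
          hrest (gmatI G), ← hRI]
      have eg' : ∏ i, gmat G (σ' i) i = X * (X * Rg) := by
        rw [hsplit (fun i => gmat G (σ' i) i), hσ'i₀, hσ'j₀, gmat_diag, gmat_diag,
          hrest (gmat G), ← hRg]
      have hsign : ((Equiv.Perm.sign σ : ℤ) : Polynomial ℂ)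
          = -((Equiv.Perm.sign σ' : ℤ) : Polynomial ℂ) := by
        rw [hσ', Equiv.Perm.sign_mul, Equiv.Perm.sign_swap hne0.symm]
        push_cast
        ring
      rw [eI', eg'] at hIH
      rw [eI, eg, hsign]
      have hCC : Polynomial.C (-Complex.I) * Polynomial.C (-Complex.I) = -1 := by
        rw [← Polynomial.C_mul]
        have : (-Complex.I) * (-Complex.I) = -1 := by
          have := Complex.I_mul_I
          ring_nf
          rw [Complex.I_sq]
        rw [this]
        simp
      have hXX : (X * X : Polynomial ℂ) ≠ 0 := mul_ne_zero Polynomial.X_ne_zero Polynomial.X_ne_zero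
      apply mul_right_cancel₀ hXX
      calc -((Equiv.Perm.sign σ' : ℤ) : Polynomial ℂ) * (Polynomial.C (-Complex.I)
            * (Polynomial.C (-Complex.I) * RI)) * (X * X)
          = -(Polynomial.C (-Complex.I) * Polynomial.C (-Complex.I))
              * (((Equiv.Perm.sign σ' : ℤ) : Polynomial ℂ) * (X * (X * RI))) := by ring
        _ = -(Polynomial.C (-Complex.I) * Polynomial.C (-Complex.I)) * (X * (X * Rg)) := by
              rw [hIH]
        _ = -1 * (-1 * Rg) * (X * X) := by rw [hCC]; ring

theorem permPoly_acyclic_det {V : Type*} [Fintype V] [DecidableEq V] (G : SimpleGraph V)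
    (hG : G.IsAcyclic) : permPoly G = (gmatI G).det := by
  rw [permPoly_eq_gmat, Matrix.permanent, Matrix.det_apply']
  refine Finset.sum_congr rfl fun σ _ => ?_
  by_cases hws : ∀ i, σ i ≠ i → G.Adj (σ i) i
  · exact (invol_term G _ σ rfl (invol_of_acyclic G hG σ hws) hws).symm
  · push_neg at hws
    obtain ⟨i, hne, hnadj⟩ := hws
    rw [show (∏ i, gmat G (σ i) i) = 0 from
        Finset.prod_eq_zero (Finset.mem_univ i) (gmat_nadj G hne hnadj),
      show (∏ i, gmatI G (σ i) i) = 0 from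
        Finset.prod_eq_zero (Finset.mem_univ i) (gmatI_nadj G hne hnadj), mul_zero]

open scoped ComplexOrder in
theorem roots_re_eq_zero_of_acyclic {V : Type*} [Fintype V] [DecidableEq V] (G : SimpleGraph V)
    (hG : G.IsAcyclic) : ∀ z ∈ (permPoly G).roots, z.re = 0 := by
  classical
  intro z hz
  have hroot : (permPoly G).IsRoot z := (Polynomial.mem_roots'.mp hz).2
  rw [permPoly_acyclic_det G hG] at hroot
  have hdet : ((gmatI G).map (Polynomial.evalRingHom z)).det = 0 := by
    rw [← RingHom.mapMatrix_apply, ← RingHom.map_det]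
    exact hroot
  obtain ⟨v, hv0, hv⟩ := (Matrix.exists_mulVec_eq_zero_iff).mpr hdet
  letI := Classical.decRel G.Adj
  set A := G.adjMatrix ℂ with hA
  have hN : (gmatI G).map (Polynomial.evalRingHom z)
      = z • (1 : Matrix V V ℂ) - Complex.I • A := by
    refine Matrix.ext fun i j => ?_
    rw [Matrix.map_apply, Matrix.sub_apply, Matrix.smul_apply, Matrix.smul_apply,
      Matrix.one_apply, hA, SimpleGraph.adjMatrix_apply]
    by_cases hij : i = j
    · subst hij
      rw [gmatI_diag]
      simp [SimpleGraph.irrefl]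
    · by_cases hadj : G.Adj i j
      · rw [gmatI_adj G hadj]
        simp [hij, hadj]
      · rw [gmatI_nadj G hij hadj]
        simp [hij, hadj]
  rw [hN] at hv
  set w := -Complex.I * z with hw
  have hAv : A.mulVec v = w • v := by
    funext i
    have h1 := congrFun hv i
    rw [Matrix.sub_mulVec, Matrix.smul_mulVec, Matrix.smul_mulVec,
      Matrix.one_mulVec] at h1
    simp only [Pi.sub_apply, Pi.smul_apply, smul_eq_mul, Pi.zero_apply] at h1
    have h2 : Complex.I * (A.mulVec v i) = z * v i := by linear_combination -h1
    have h3 : A.mulVec v i = -Complex.I * (z * v i) := by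
      linear_combination (-Complex.I) * h2 + (A.mulVec v i) * Complex.I_mul_I
    rw [Pi.smul_apply, smul_eq_mul, h3, hw]
    ring
  have hherm : Aᴴ = A := by
    refine Matrix.ext fun i j => ?_
    rw [Matrix.conjTranspose_apply, hA, SimpleGraph.adjMatrix_apply,
      SimpleGraph.adjMatrix_apply]
    by_cases hadj : G.Adj i j
    · rw [if_pos hadj.symm, if_pos hadj]
      exact star_one ℂ
    · rw [if_neg (fun hc => hadj hc.symm), if_neg hadj]
      exact star_zero ℂ
  have e1 : dotProduct (star v) (A.mulVec v) = w * dotProduct (star v) v := by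
    rw [hAv, dotProduct_smul, smul_eq_mul]
  have e2 : dotProduct (star v) (A.mulVec v)
      = (starRingEnd ℂ) w * dotProduct (star v) v := by
    rw [dotProduct_mulVec]
    have hvm : Matrix.vecMul (star v) A = star (A.mulVec v) := by
      rw [Matrix.star_mulVec, hherm]
    rw [hvm, hAv, star_smul, smul_dotProduct, starRingEnd_apply, smul_eq_mul]
  have hvv : dotProduct (star v) v ≠ 0 := fun hc =>
    hv0 (dotProduct_star_self_eq_zero.mp hc)
  have hwconj : (starRingEnd ℂ) w = w := mul_right_cancel₀ hvv (e2.symm.trans e1)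
  have hwim : w.im = 0 := Complex.conj_eq_iff_im.mp hwconj
  have hzw : z = Complex.I * w := by
    rw [hw]
    linear_combination z * Complex.I_mul_I
  rw [hzw, Complex.mul_re, Complex.I_re, Complex.I_im, hwim]
  ring


end AuxPerm

/-- Schwenk-type formula for the coalescence of a rooted graph `(G₁, r₁)` with
the rooted tree `T = R(T'^(k), r₂)`:
`π(G) = π(T')^(k−1) · (π(G₁)π(T') + k·π(G₁ − r₁)π(T' − u'))`.
In particular, `G` has purely imaginary per-spectrum iff the polynomial
`H = π(G₁)π(T') + k·π(G₁ − r₁)π(T' − u')` has all roots purely imaginary. -/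
theorem permPoly_coalesce_starTree
    {V₁ V' : Type*} [Fintype V₁] [DecidableEq V₁] [Fintype V'] [DecidableEq V']
    (G₁ : SimpleGraph V₁) (r₁ : V₁) (T' : SimpleGraph V') (u' : V')
    (hT' : T'.IsTree) (k : ℕ) (hk : 1 ≤ k) :
    permPoly (coalesce G₁ r₁ (starTree k T' u') (Sum.inl ())) =
        permPoly T' ^ (k - 1) *
          (permPoly G₁ * permPoly T' +
            (k : Polynomial ℂ) *
              (permPoly (G₁.induce {v | v ≠ r₁}) *
                permPoly (T'.induce {v | v ≠ u'}))) ∧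
      ((∀ z ∈ (permPoly (coalesce G₁ r₁ (starTree k T' u') (Sum.inl ()))).roots,
          z.re = 0) ↔
        (∀ z ∈ (permPoly G₁ * permPoly T' +
            (k : Polynomial ℂ) *
              (permPoly (G₁.induce {v | v ≠ r₁}) *
                permPoly (T'.induce {v | v ≠ u'}))).roots, z.re = 0)) := by

  have hfac : permPoly (coalesce G₁ r₁ (starTree k T' u') (Sum.inl ())) =
      permPoly T' ^ (k - 1) *
        (permPoly G₁ * permPoly T' +
          (k : Polynomial ℂ) *
            (permPoly (G₁.induce {v | v ≠ r₁}) *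
              permPoly (T'.induce {v | v ≠ u'}))) := by
    rw [permPoly_coalesce_eq]
    obtain ⟨m, rfl⟩ : ∃ m, k = m + 1 := ⟨k - 1, by omega⟩
    push_cast [Nat.add_sub_cancel]
    ring
  refine ⟨hfac, ?_⟩
  have hG_ne : permPoly (coalesce G₁ r₁ (starTree k T' u') (Sum.inl ())) ≠ 0 :=
    permPoly_ne_zero _
  have hT_ne : permPoly T' ≠ 0 := permPoly_ne_zero _
  have hH_ne : permPoly G₁ * permPoly T' +
      (k : Polynomial ℂ) *
        (permPoly (G₁.induce {v | v ≠ r₁}) * permPoly (T'.induce {v | v ≠ u'})) ≠ 0 := by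
    intro hc
    rw [hfac, hc, mul_zero] at hG_ne
    exact hG_ne rfl
  have hroots : (permPoly (coalesce G₁ r₁ (starTree k T' u') (Sum.inl ()))).roots
      = (k - 1) • (permPoly T').roots +
        (permPoly G₁ * permPoly T' +
          (k : Polynomial ℂ) *
            (permPoly (G₁.induce {v | v ≠ r₁}) * permPoly (T'.induce {v | v ≠ u'}))).roots := by
    rw [hfac, Polynomial.roots_mul (mul_ne_zero (pow_ne_zero _ hT_ne) hH_ne),
      Polynomial.roots_pow]
  constructor
  · intro hall z hzH
    apply hall
    rw [hroots]
    exact Multiset.mem_add.mpr (Or.inr hzH)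
  · intro hHall z hz
    rw [hroots] at hz
    rcases Multiset.mem_add.mp hz with h | h
    · exact roots_re_eq_zero_of_acyclic T' hT'.IsAcyclic z (Multiset.mem_of_mem_nsmul h)
    · exact hHall z h
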